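/- Let G be a finite cyclic group and c ∈ G an element of even order. Then there exists g ∈ G with 2g = c if and only if |G| / ord(c) is even. -/
import Mathlib

lemma zmod_aux (n : ℕ) (hn : n ≠ 0) (x : ZMod n) (hc : Even (addOrderOf x)) :
    (∃ g : ZMod n, 2 • g = x) ↔ Even (n / addOrderOf x) := by
  haveI : NeZero n := ⟨hn⟩
  have hne : Even n := by
    have hd : addOrderOf x ∣ n := by
      simpa [Nat.card_eq_fintype_card, ZMod.card] using addOrderOf_dvd_natCard x
    exact hc.trans_dvd hd
  constructor
  · rintro ⟨g, rfl⟩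
    have h0 : (n / 2) • (2 • g) = 0 := by
      rw [smul_smul, Nat.div_mul_cancel hne.two_dvd, nsmul_eq_mul, ZMod.natCast_self, zero_mul]
    have hd : addOrderOf (2 • g) ∣ n / 2 := addOrderOf_dvd_of_nsmul_eq_zero h0
    obtain ⟨t, ht⟩ := hd
    have hdpos : 0 < addOrderOf (2 • g) := addOrderOf_pos _
    have hne' : n = addOrderOf (2 • g) * t * 2 := by
      rw [← ht, Nat.div_mul_cancel hne.two_dvd]
    exact ⟨t, Nat.div_eq_of_eq_mul_left hdpos (hne'.trans (by ring))⟩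
  · intro h
    have hx : ((x.val : ℕ) : ZMod n) = x := ZMod.natCast_val x |>.trans (ZMod.cast_id n x)
    have hord : addOrderOf x = n / Nat.gcd n x.val := by
      conv_lhs => rw [← hx]
      exact ZMod.addOrderOf_coe _ hn
    have hgd : Nat.gcd n x.val ∣ n := Nat.gcd_dvd_left _ _
    have heq : n / addOrderOf x = Nat.gcd n x.val := by
      rw [hord, Nat.div_div_self hgd hn]
    rw [heq] at h
    have h2a : 2 ∣ x.val := h.two_dvd.trans (Nat.gcd_dvd_right _ _)
    refine ⟨((x.val / 2 : ℕ) : ZMod n), ?_⟩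
    have : (2 : ℕ) • ((x.val / 2 : ℕ) : ZMod n) = ((2 * (x.val / 2) : ℕ) : ZMod n) := by
      push_cast; ring
    rw [this, Nat.mul_div_cancel' h2a, hx]

/-- in a finite cyclic group, an element `c` of even order is
twice some element iff `|G| / ord(c)` is even. -/
theorem stmt_11 (G : Type*) [AddCommGroup G] [Fintype G] [IsAddCyclic G] (c : G)
    (hc : Even (addOrderOf c)) :
    (∃ g : G, 2 • g = c) ↔ Even (Fintype.card G / addOrderOf c) := by
  have e : ZMod (Nat.card G) ≃+ G := zmodAddCyclicAddEquiv inferInstance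
  have hcard : Nat.card G = Fintype.card G := Nat.card_eq_fintype_card
  have hord : addOrderOf (e.symm c) = addOrderOf c := by
    rw [← addOrderOf_injective e.symm.toAddMonoidHom e.symm.injective c]
    rfl
  have key := zmod_aux (Nat.card G) (by simp [hcard, Fintype.card_ne_zero]) (e.symm c)
    (by rwa [hord])
  rw [hord] at key
  rw [show Fintype.card G = Nat.card G from hcard.symm, ← key]
  constructor
  · rintro ⟨g, rfl⟩
    exact ⟨e.symm g, by rw [← map_nsmul]⟩
  · rintro ⟨g, hg⟩
    exact ⟨e g, by rw [← map_nsmul, hg, e.apply_symm_apply]⟩
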